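/- For every positive integer k and every dimension n ≥ 2, there exist a ∈ Z^n with nonzero entries, gcd(a) = 1 and ‖a‖_∞ = k, and b ∈ Z, such that the knapsack polyhedron P(a,b) = {x ∈ R^n_{≥0} : a^T x = b} has a vertex v with min over z ∈ P(a,b) ∩ Z^n of ‖v − z‖_∞ equal to k − 1. Concretely, a = (k,...,k,1) and b = k−1 work: P(a,b) ∩ Z^n = {(k−1)e_n}, and the vertex v = ((k−1)/k)·e_1 satisfies ‖v − (k−1)e_n‖_∞ = k−1. -/

import Mathlib

/-- for every `k ≥ 1` and `n ≥ 2` there are a primitive integer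
vector `a` with nonzero entries, `‖a‖_∞ = k`, and `b ∈ ℤ` such that the knapsack
polyhedron `P(a,b)` has a vertex `v` whose minimal `ℓ∞`-distance to an integer
point of `P(a,b)` equals `k − 1`. -/
theorem stmt_6 (n k : ℕ) (hn : 2 ≤ n) (hk : 1 ≤ k) :
    ∃ (a : Fin n → ℤ) (b : ℤ),
      (∀ i, a i ≠ 0) ∧ Finset.univ.gcd a = 1 ∧
      (Finset.univ.sup fun i => (a i).natAbs) = k ∧
      ∃ P : Set (Fin n → ℝ),
        P = {x | (∀ i, 0 ≤ x i) ∧ ∑ i, (a i : ℝ) * x i = (b : ℝ)} ∧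
        ∃ v ∈ Set.extremePoints ℝ P,
          IsLeast {t : ℝ | ∃ z : Fin n → ℤ,
              (fun i => (z i : ℝ)) ∈ P ∧ t = ‖v - fun i => (z i : ℝ)‖}
            ((k : ℝ) - 1) := by
  have h0 : 0 < n := by omega
  have h1 : 1 < n := by omega
  set i0 : Fin n := ⟨0, h0⟩ with hi0
  set i1 : Fin n := ⟨1, h1⟩ with hi1
  have hne : i0 ≠ i1 := by simp [hi0, hi1, Fin.ext_iff]
  have hkR : (1:ℝ) ≤ (k:ℝ) := by exact_mod_cast hk
  have hkR0 : (0:ℝ) < k := by linarith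
  have hkne : (k:ℝ) ≠ 0 := ne_of_gt hkR0
  set a : Fin n → ℤ := fun i => if i = i1 then 1 else (k:ℤ) with ha
  refine ⟨a, (k:ℤ) - 1, ?_, ?_, ?_, ?_⟩
  · intro i; by_cases h : i = i1 <;> simp [ha, h] <;> omega
  · have hd : Finset.univ.gcd a ∣ 1 := by
      have := Finset.gcd_dvd (Finset.mem_univ i1) (f := a)
      simpa [ha] using this
    have hnn : 0 ≤ Finset.univ.gcd a := by
      rw [← Finset.normalize_gcd, ← Int.abs_eq_normalize]; exact abs_nonneg _
    have := Int.isUnit_iff.mp (isUnit_of_dvd_one hd)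
    omega
  · apply le_antisymm
    · apply Finset.sup_le
      intro i _
      by_cases h : i = i1 <;> simp [ha, h] <;> omega
    · have := Finset.le_sup (f := fun i => (a i).natAbs) (Finset.mem_univ i0)
      simpa [ha, hne] using this
  · refine ⟨_, rfl, ?_⟩
    set v : Fin n → ℝ := fun i => if i = i0 then ((k:ℝ)-1)/k else 0 with hv
    have hvnn : ∀ i, 0 ≤ v i := by
      intro i
      by_cases h : i = i0 <;> simp [hv, h]
      exact div_nonneg (by linarith) (le_of_lt hkR0)
    have hsum_v : ∑ i, ((a i : ℤ) : ℝ) * v i = (k:ℝ) - 1 := by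
      rw [Finset.sum_eq_single i0]
      · simp [ha, hv, hne, mul_div_cancel₀ _ hkne]
      · intro i _ hi; simp [hv, hi]
      · simp
    have hvP : v ∈ {x : Fin n → ℝ | (∀ i, 0 ≤ x i) ∧ ∑ i, (a i : ℝ) * x i = (((k:ℤ)-1 : ℤ) : ℝ)} := by
      refine ⟨hvnn, ?_⟩
      rw [hsum_v]; push_cast; ring
    -- the unique integer point
    set z0 : Fin n → ℤ := fun i => if i = i1 then (k:ℤ)-1 else 0 with hz0
    have hz0P : (fun i => ((z0 i : ℤ) : ℝ)) ∈ {x : Fin n → ℝ | (∀ i, 0 ≤ x i) ∧ ∑ i, (a i : ℝ) * x i = (((k:ℤ)-1 : ℤ) : ℝ)} := by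
      constructor
      · intro i
        by_cases h : i = i1 <;> simp [hz0, h]
        exact_mod_cast hkR
      · rw [Finset.sum_eq_single i1]
        · simp [ha, hz0]
        · intro i _ hi; simp [hz0, hi]
        · simp
    have hnorm : ‖v - fun i => ((z0 i : ℤ) : ℝ)‖ = (k:ℝ) - 1 := by
      apply le_antisymm
      · apply pi_norm_le_iff_of_nonneg (by linarith) |>.mpr
        intro i
        by_cases h1' : i = i1
        · simp [hz0, hv, h1', hne.symm, Pi.sub_apply]
          rw [abs_of_nonpos (by linarith)]
          push_cast; ring_nf; rfl
        · by_cases h0' : i = i0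
          · simp [hz0, hv, h0', hne, Pi.sub_apply]
            rw [abs_of_nonneg (show (0:ℝ) ≤ (k:ℝ) - 1 by linarith)]
            calc ((k:ℝ)-1)/k ≤ ((k:ℝ)-1)/1 := by
                  apply div_le_div_of_nonneg_left <;> linarith
              _ = (k:ℝ) - 1 := by ring
          · simp [hz0, hv, h1', h0', Pi.sub_apply]
            linarith
      · calc (k:ℝ) - 1 = ‖(v - fun i => ((z0 i : ℤ) : ℝ)) i1‖ := by
              simp [hz0, hv, hne.symm, Pi.sub_apply]
              rw [abs_of_nonpos (by linarith)]
              push_cast; ring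
          _ ≤ _ := norm_le_pi_norm _ i1
    refine ⟨v, ?_, ?_, ?_⟩
    · refine ⟨hvP, ?_⟩
      intro x hx y hy hseg
      obtain ⟨s, t, hs, ht, hst, heq⟩ := hseg
      have hzero : ∀ i, i ≠ i0 → x i = 0 ∧ y i = 0 := by
        intro i hi
        have h1 : (s • x + t • y) i = v i := by rw [heq]
        have h2 : s * x i + t * y i = 0 := by
          simpa [hv, hi] using h1
        have hx0 := hx.1 i
        have hy0 := hy.1 i
        constructor <;> nlinarith
      have key : ∀ w : Fin n → ℝ, w ∈ {x : Fin n → ℝ | (∀ i, 0 ≤ x i) ∧ ∑ i, (a i : ℝ) * x i = (((k:ℤ)-1 : ℤ) : ℝ)} → (∀ i, i ≠ i0 → w i = 0) → w = v := by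
        intro w hw hw0
        have hsum : ∑ i, ((a i : ℤ) : ℝ) * w i = (k:ℝ) * w i0 := by
          rw [Finset.sum_eq_single i0]
          · simp [ha, hne]
          · intro i _ hi; simp [hw0 i hi]
          · simp
        have : (k:ℝ) * w i0 = (k:ℝ) - 1 := by
          rw [← hsum, hw.2]; push_cast; ring
        funext i
        by_cases h : i = i0
        · subst h
          simp [hv]
          field_simp
          linarith
        · simp [hv, h, hw0 i h]
      exact key x hx (fun i hi => (hzero i hi).1)
    · exact ⟨z0, hz0P, hnorm.symm⟩
    · rintro t ⟨z, hzP, rfl⟩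
      -- show z = z0
      have hznn : ∀ i, 0 ≤ z i := by
        intro i
        have := hzP.1 i
        simp only at this
        exact_mod_cast this
      have hsumZ : ∑ i, a i * z i = (k:ℤ) - 1 := by
        have h2 := hzP.2
        simp only at h2
        have h' : ((∑ i, a i * z i : ℤ) : ℝ) = ((k:ℤ) - 1 : ℤ) := by
          push_cast
          push_cast at h2
          convert h2 using 1
        exact_mod_cast h'
      have e1 : ∑ i ∈ Finset.univ.erase i1, a i * z i
          = (k:ℤ) * ∑ i ∈ Finset.univ.erase i1, z i := by
        rw [Finset.mul_sum]
        apply Finset.sum_congr rfl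
        intro i hi
        simp [ha, Finset.ne_of_mem_erase hi]
      have hsplit : z i1 + (k:ℤ) * ∑ i ∈ Finset.univ.erase i1, z i = (k:ℤ) - 1 := by
        rw [← hsumZ, ← Finset.sum_erase_add _ _ (Finset.mem_univ i1), e1]
        simp [ha]
        ring
      set S := ∑ i ∈ Finset.univ.erase i1, z i with hS
      have hSnn : 0 ≤ S := Finset.sum_nonneg fun i _ => hznn i
      have hkZ : (1:ℤ) ≤ k := by exact_mod_cast hk
      have hS0 : S = 0 := by nlinarith [hznn i1]
      have hzi1 : z i1 = (k:ℤ) - 1 := by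
        rw [hS0] at hsplit; omega
      have hzerase : ∀ i ∈ Finset.univ.erase i1, z i = 0 := by
        rw [← hS] at *
        intro i hi
        exact (Finset.sum_eq_zero_iff_of_nonneg fun j _ => hznn j).mp hS0 i hi
      have hz : z = z0 := by
        funext i
        by_cases h : i = i1
        · rw [h, hzi1]; simp [hz0]
        · rw [hzerase i (Finset.mem_erase.mpr ⟨h, Finset.mem_univ i⟩)]
          simp [hz0, h]
      rw [hz, hnorm]
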